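/- Let n be a positive integer, ω a complex constant, and c, λ₁, λ₂, p₁, p₂ nonzero complex constants with λ₁ ≠ λ₂; let q be a complex polynomial not identically zero and Q a nonconstant complex polynomial. Then there is no transcendental entire function f of finite order with σ(f) < 1 satisfying f(z)^n + ω f(z)^{n-1} f'(z) + q(z) e^{Q(z)} f(z+c) = p₁ e^{λ₁ z} + p₂ e^{λ₂ z} for all z ∈ ℂ. -/

import Mathlib

set_option maxHeartbeats 1000000

open Filter Polynomial

/-- The maximum modulus `M(r, f) = max_{|z| = r} |f z|` of an entire function. -/
noncomputable def maxModulus (f : ℂ → ℂ) (r : ℝ) : ℝ :=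
  sSup ((fun z => ‖f z‖) '' Metric.sphere (0 : ℂ) r)

/-- The order of growth `σ(f) = limsup_{r → ∞} log log M(r,f) / log r` of an entire
function, as an extended real number. -/
noncomputable def growthOrder (f : ℂ → ℂ) : EReal :=
  Filter.limsup
    (fun r : ℝ => ((Real.log (Real.log (maxModulus f r)) / Real.log r : ℝ) : EReal))
    Filter.atTop

noncomputable def Complex.abs : AbsoluteValue ℂ ℝ := NormedField.toAbsoluteValue ℂ

theorem Complex.abs_apply (z : ℂ) : Complex.abs z = ‖z‖ := rfl

theorem Complex.norm_eq_abs (z : ℂ) : ‖z‖ = Complex.abs z := rfl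

theorem Complex.abs_conj (z : ℂ) : Complex.abs ((starRingEnd ℂ) z) = Complex.abs z :=
  Complex.norm_conj z

theorem Complex.abs_ofReal (r : ℝ) : Complex.abs (r : ℂ) = |r| := Complex.norm_real r

theorem Complex.abs_exp (z : ℂ) : Complex.abs (Complex.exp z) = Real.exp z.re :=
  Complex.norm_exp z

theorem Complex.continuous_abs : Continuous Complex.abs := continuous_norm

theorem Complex.abs_re_le_abs (z : ℂ) : |z.re| ≤ Complex.abs z := Complex.abs_re_le_norm z

theorem Complex.normSq_eq_abs (z : ℂ) : Complex.normSq z = Complex.abs z ^ 2 :=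
  Complex.normSq_eq_norm_sq z

theorem Complex.abs_mul_exp_arg_mul_I (z : ℂ) :
    (Complex.abs z : ℂ) * Complex.exp (z.arg * Complex.I) = z :=
  Complex.norm_mul_exp_arg_mul_I z

local notation "π" => Real.pi
local notation "conj'" => (starRingEnd ℂ)

namespace StmtAux

lemma mul_unit_dir {l : ℂ} (hl : l ≠ 0) (w : ℂ) :
    l * (w * (conj' l / (Complex.abs l : ℂ))) = (Complex.abs l : ℂ) * w := by
  have h1 : (Complex.abs l : ℂ) ≠ 0 := by
    simpa using (Complex.abs.ne_zero hl)
  field_simp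
  rw [show l * w * conj' l = w * (l * conj' l) by ring, Complex.mul_conj,
    Complex.normSq_eq_abs]
  push_cast
  ring

lemma abs_unit_dir {l : ℂ} (hl : l ≠ 0) :
    Complex.abs (conj' l / (Complex.abs l : ℂ)) = 1 := by
  rw [map_div₀, Complex.abs_conj, Complex.abs_ofReal, abs_of_nonneg (Complex.abs.nonneg l),
    div_self (Complex.abs.ne_zero hl)]

/-- `Re (m e^{iφ}) = |m| cos (arg m + φ)`. -/
lemma re_mul_exp (m : ℂ) (φ : ℝ) :
    (m * Complex.exp (φ * Complex.I)).re = Complex.abs m * Real.cos (m.arg + φ) := by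
  conv_lhs => rw [← Complex.abs_mul_exp_arg_mul_I m]
  rw [mul_assoc, ← Complex.exp_add, show (m.arg : ℂ) * Complex.I + φ * Complex.I
      = ((m.arg + φ : ℝ) : ℂ) * Complex.I by push_cast; ring,
    Complex.re_ofReal_mul, Complex.exp_ofReal_mul_I_re]

/-- Two zeros of `φ ↦ Re (m e^{iφ})` (for `m ≠ 0`) differ by at least `π`. -/
lemma zeros_spaced {m : ℂ} (hm : m ≠ 0) {x y : ℝ}
    (hx : (m * Complex.exp (x * Complex.I)).re = 0)
    (hy : (m * Complex.exp (y * Complex.I)).re = 0) (hxy : x ≠ y) : π ≤ |x - y| := by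
  rw [re_mul_exp] at hx hy
  have hm' : Complex.abs m ≠ 0 := Complex.abs.ne_zero hm
  have hx' : Real.cos (m.arg + x) = 0 := by
    rcases mul_eq_zero.1 hx with h | h
    · exact absurd h hm'
    · exact h
  have hy' : Real.cos (m.arg + y) = 0 := by
    rcases mul_eq_zero.1 hy with h | h
    · exact absurd h hm'
    · exact h
  obtain ⟨k, hk⟩ := Real.cos_eq_zero_iff.1 hx'
  obtain ⟨j, hj⟩ := Real.cos_eq_zero_iff.1 hy'
  have hdiff : x - y = (k - j : ℤ) * π := by
    have : m.arg + x - (m.arg + y) = (2 * k + 1) * π / 2 - (2 * j + 1) * π / 2 := by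
      rw [hk, hj]
    push_cast at this ⊢
    linarith
  have hkj : (k : ℝ) ≠ (j : ℝ) := by
    intro h
    apply hxy
    have : x - y = 0 := by rw [hdiff]; push_cast at h ⊢; rw [sub_eq_zero.2 h]; ring
    linarith
  have h1 : (1 : ℝ) ≤ |(k - j : ℤ)| := by
    have : (k - j : ℤ) ≠ 0 := by
      intro h
      apply hkj
      have := sub_eq_zero.1 h
      exact_mod_cast congrArg (Int.cast : ℤ → ℝ) this
    exact_mod_cast Int.one_le_abs (by omega)
  calc π = 1 * π := (one_mul π).symm
    _ ≤ |(k - j : ℤ)| * π := by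
        apply mul_le_mul_of_nonneg_right h1 Real.pi_pos.le
    _ = |x - y| := by
        rw [hdiff, abs_mul, abs_of_nonneg Real.pi_pos.le]
        norm_cast

/-- A continuous function nonnegative on an open interval minus a point is
nonnegative on the closed interval. -/
lemma nonneg_on_Icc {g : ℝ → ℝ} (hg : Continuous g) {a b e : ℝ} (hab : a < b)
    (h : ∀ x, x ∈ Set.Ioo a b → x ≠ e → 0 ≤ g x) : ∀ x ∈ Set.Icc a b, 0 ≤ g x := by
  have hS : IsClosed {x : ℝ | 0 ≤ g x} := isClosed_le continuous_const hg
  by_cases he : e ∈ Set.Ioo a b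
  · intro x hx
    have h1 : Set.Icc a e ⊆ {x : ℝ | 0 ≤ g x} := by
      rw [← closure_Ioo (ne_of_lt he.1)]
      exact hS.closure_subset_iff.2 fun y hy => h y ⟨hy.1, hy.2.trans he.2⟩ (ne_of_lt hy.2)
    have h2 : Set.Icc e b ⊆ {x : ℝ | 0 ≤ g x} := by
      rw [← closure_Ioo (ne_of_lt he.2)]
      exact hS.closure_subset_iff.2 fun y hy => h y ⟨he.1.trans hy.1, hy.2⟩ (ne_of_gt hy.1)
    rcases le_total x e with hxe | hxe
    · exact h1 ⟨hx.1, hxe⟩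
    · exact h2 ⟨hxe, hx.2⟩
  · intro x hx
    have h1 : Set.Icc a b ⊆ {x : ℝ | 0 ≤ g x} := by
      rw [← closure_Ioo (ne_of_lt hab)]
      exact hS.closure_subset_iff.2 fun y hy => h y hy (fun hye => he (hye ▸ hy))
    exact h1 hx


lemma re_mul_exp' (w : ℂ) (φ : ℝ) :
    (w * Complex.exp ((φ : ℂ) * Complex.I)).re = w.re * Real.cos φ - w.im * Real.sin φ := by
  rw [Complex.mul_re, Complex.exp_ofReal_mul_I_re, Complex.exp_ofReal_mul_I_im]

lemma eq_nonneg_mul {l m x : ℂ} (hl : l ≠ 0) (hm : m ≠ 0)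
    (h : ∀ v : ℂ, Complex.abs v = 1 → 0 < (l * v).re → (m * v).re ≠ 0 → 0 ≤ (x * v).re) :
    ∃ t : ℝ, 0 ≤ t ∧ x = (t : ℂ) * l := by
  set u₀ : ℂ := conj' l / (Complex.abs l : ℂ) with hu₀
  have habs : Complex.abs u₀ = 1 := abs_unit_dir hl
  have hm' : m * u₀ ≠ 0 := by
    intro h0
    rcases mul_eq_zero.1 h0 with h0 | h0
    · exact hm h0
    · rw [h0] at habs; simp at habs
  set w : ℂ := x * u₀ with hw
  have hvabs : ∀ φ : ℝ, Complex.abs (Complex.exp ((φ:ℂ) * Complex.I) * u₀) = 1 := by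
    intro φ
    rw [map_mul, habs, mul_one, Complex.abs_exp]
    simp
  have hlv : ∀ φ : ℝ, (l * (Complex.exp ((φ:ℂ) * Complex.I) * u₀)).re
      = Complex.abs l * Real.cos φ := by
    intro φ
    rw [mul_unit_dir hl, Complex.re_ofReal_mul, Complex.exp_ofReal_mul_I_re]
  have hxv : ∀ φ : ℝ, (x * (Complex.exp ((φ:ℂ) * Complex.I) * u₀)).re
      = (w * Complex.exp ((φ:ℂ) * Complex.I)).re := by
    intro φ; rw [hw]; ring_nf
  have hmv : ∀ φ : ℝ, (m * (Complex.exp ((φ:ℂ) * Complex.I) * u₀)).re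
      = ((m * u₀) * Complex.exp ((φ:ℂ) * Complex.I)).re := by
    intro φ; ring_nf
  have hcont : Continuous fun φ : ℝ => (w * Complex.exp ((φ:ℂ) * Complex.I)).re := by
    apply Complex.continuous_re.comp
    exact continuous_const.mul (Complex.continuous_exp.comp
      (Complex.continuous_ofReal.mul continuous_const))
  have hpi2 : -(π/2) < π/2 := by linarith [Real.pi_pos]
  -- main claim
  have main : ∀ φ ∈ Set.Icc (-(π/2)) (π/2), 0 ≤ (w * Complex.exp ((φ:ℂ) * Complex.I)).re := by
    have key : ∀ (e : ℝ),
        (∀ φ₀ ∈ Set.Ioo (-(π/2)) (π/2), ((m * u₀) * Complex.exp ((φ₀:ℂ) * Complex.I)).re = 0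
          → φ₀ = e) →
        ∀ φ ∈ Set.Icc (-(π/2)) (π/2), 0 ≤ (w * Complex.exp ((φ:ℂ) * Complex.I)).re := by
      intro e he
      apply nonneg_on_Icc hcont hpi2
      intro ψ hψ hne
      rw [← hxv]
      apply h _ (hvabs ψ)
      · rw [hlv]
        exact mul_pos (Complex.abs.pos hl) (Real.cos_pos_of_mem_Ioo hψ)
      · rw [hmv]
        intro h0
        exact hne (he ψ hψ h0)
    by_cases hex : ∃ φ₀ ∈ Set.Ioo (-(π/2)) (π/2),
        ((m * u₀) * Complex.exp ((φ₀:ℂ) * Complex.I)).re = 0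
    · obtain ⟨φ₀, hφ₀, hz⟩ := hex
      apply key φ₀
      intro ψ hψ h0
      by_contra hne
      have := zeros_spaced hm' h0 hz hne
      have habs : |ψ - φ₀| < π := abs_lt.2 ⟨by linarith [hψ.1, hφ₀.2], by linarith [hψ.2, hφ₀.1]⟩
      linarith
    · push_neg at hex
      apply key π
      intro ψ hψ h0
      exact absurd h0 (hex ψ hψ)
  -- evaluate
  have e1 := main (π/2) ⟨by linarith, le_refl _⟩
  have e2 := main (-(π/2)) ⟨le_refl _, by linarith⟩
  have e3 := main 0 ⟨by linarith, by linarith⟩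
  rw [re_mul_exp'] at e1 e2 e3
  simp [Real.cos_pi_div_two, Real.sin_pi_div_two] at e1 e2 e3
  have him : w.im = 0 := le_antisymm e1 e2
  -- now w = x * u₀ is the real number w.re ≥ 0
  have hwre : x * u₀ = ((w.re : ℝ) : ℂ) := by
    rw [← hw]
    exact Complex.ext rfl him
  have hlx : (Complex.abs l : ℂ) * x = l * ((w.re : ℝ) : ℂ) := by
    rw [← hwre, mul_unit_dir hl x]
  refine ⟨w.re / Complex.abs l, div_nonneg e3 (Complex.abs.nonneg l), ?_⟩
  have habsl : (Complex.abs l : ℂ) ≠ 0 := by simpa using Complex.abs.ne_zero hl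
  field_simp
  rw [mul_comm] at hlx
  rw [Complex.ofReal_div, div_mul_eq_mul_div, eq_div_iff habsl, hlx]
  ring

lemma exists_cos_neg_interval (x₀ : ℝ) {L : ℝ} (hL : 2*π ≤ L) :
    ∃ s t : ℝ, s < t ∧ x₀ ≤ s ∧ t ≤ x₀ + L ∧ t - s ≤ π ∧
      ∀ ψ ∈ Set.Ioo s t, Real.cos ψ < 0 := by
  have hπ := Real.pi_pos
  set k : ℤ := ⌈(x₀ - π/2)/(2*π)⌉ with hk
  set a' : ℝ := π/2 + k*(2*π) with ha'
  have h1 : x₀ ≤ a' := by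
    have := Int.le_ceil ((x₀ - π/2)/(2*π))
    rw [div_le_iff₀ (by linarith : (0:ℝ) < 2*π)] at this
    rw [ha']; linarith
  have h2 : a' < x₀ + 2*π := by
    have := Int.ceil_lt_add_one ((x₀ - π/2)/(2*π))
    rw [← hk] at this
    have h2' : (k : ℝ) * (2*π) < ((x₀ - π/2)/(2*π) + 1) * (2*π) := by
      apply mul_lt_mul_of_pos_right this (by linarith)
    rw [add_mul, div_mul_cancel₀ _ (by linarith : (2*π:ℝ) ≠ 0)] at h2'
    rw [ha']; linarith
  refine ⟨a', min (a' + π) (x₀ + L), lt_min (by linarith) (by linarith), h1,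
    min_le_right _ _, by
      have := min_le_left (a' + π) (x₀ + L); linarith, ?_⟩
  intro ψ hψ
  have hψ1 : a' < ψ := hψ.1
  have hψ2 : ψ < a' + π := lt_of_lt_of_le hψ.2 (min_le_left _ _)
  have : Real.cos (ψ - k*(2*π) + k*(2*π)) = Real.cos (ψ - k*(2*π)) :=
    Real.cos_add_int_mul_two_pi _ k
  rw [sub_add_cancel] at this
  rw [this]
  apply Real.cos_neg_of_pi_div_two_lt_of_lt
  · rw [ha'] at hψ1; linarith
  · rw [ha'] at hψ2; linarith

lemma exists_unit_dir {l m M : ℂ} (hl : l ≠ 0) (hm : m ≠ 0) (hM : M ≠ 0) {d : ℕ} (hd : 2 ≤ d) :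
    ∃ v : ℂ, Complex.abs v = 1 ∧ 0 < (l*v).re ∧ (m*v).re ≠ 0 ∧ (M * v^d).re < 0 := by
  have hπ := Real.pi_pos
  set u₀ : ℂ := conj' l / (Complex.abs l : ℂ) with hu₀
  have habs : Complex.abs u₀ = 1 := abs_unit_dir hl
  have hu₀0 : u₀ ≠ 0 := by
    intro h0; rw [h0] at habs; simp at habs
  have hM' : M * u₀^d ≠ 0 := mul_ne_zero hM (pow_ne_zero _ hu₀0)
  have hm' : m * u₀ ≠ 0 := mul_ne_zero hm hu₀0
  set A := (M * u₀^d).arg with hA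
  have hdpos : (0:ℝ) < d := by positivity
  obtain ⟨s, t, hst, hs, ht, hlen, hneg⟩ :=
    exists_cos_neg_interval (A + d * (-(π/2))) (L := d * π)
      (by
        have : (2:ℝ) ≤ d := by exact_mod_cast hd
        nlinarith)
  set s' : ℝ := (s - A)/d with hs'
  set t' : ℝ := (t - A)/d with ht'
  have hst' : s' < t' := (div_lt_div_iff_of_pos_right hdpos).2 (by linarith)
  set φ₁ : ℝ := s' + (t' - s')/3 with hφ₁
  set φ₂ : ℝ := s' + 2*(t' - s')/3 with hφ₂
  have hφ₁m : s' < φ₁ ∧ φ₁ < t' := ⟨by rw [hφ₁]; linarith, by rw [hφ₁]; linarith⟩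
  have hφ₂m : s' < φ₂ ∧ φ₂ < t' := ⟨by rw [hφ₂]; linarith, by rw [hφ₂]; linarith⟩
  have hφne : φ₁ ≠ φ₂ := by
    intro h0
    rw [hφ₁, hφ₂] at h0
    have : t' - s' = 0 := by linarith
    linarith
  -- bounds : s' ≥ -(π/2), t' ≤ π/2
  have hs'lb : -(π/2) ≤ s' := by
    rw [hs']
    rw [le_div_iff₀ hdpos]
    have : A + d * (-(π/2)) ≤ s := hs
    nlinarith
  have ht'ub : t' ≤ π/2 := by
    rw [ht']
    rw [div_le_iff₀ hdpos]
    have : t ≤ A + d * (-(π/2)) + d * π := ht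
    nlinarith
  have hmem : ∀ φ : ℝ, s' < φ → φ < t' → φ ∈ Set.Ioo (-(π/2)) (π/2) :=
    fun φ h1 h2 => ⟨lt_of_le_of_lt hs'lb h1, lt_of_lt_of_le h2 ht'ub⟩
  -- the negativity of the leading term
  have hMneg : ∀ φ : ℝ, s' < φ → φ < t' →
      ((M * u₀^d) * Complex.exp (((d * φ : ℝ) : ℂ) * Complex.I)).re < 0 := by
    intro φ h1 h2
    rw [re_mul_exp, ← hA]
    apply mul_neg_of_pos_of_neg (Complex.abs.pos hM')
    apply hneg
    constructor
    · rw [hs'] at h1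
      rw [div_lt_iff₀ hdpos] at h1
      linarith [mul_comm (d:ℝ) φ]
    · rw [ht'] at h2
      rw [lt_div_iff₀ hdpos] at h2
      linarith [mul_comm (d:ℝ) φ]
  -- choose among φ₁ φ₂ one avoiding the zero of Re(m' e^{iφ})
  have hpick : ∃ φ : ℝ, (s' < φ ∧ φ < t') ∧
      ((m * u₀) * Complex.exp ((φ:ℂ) * Complex.I)).re ≠ 0 := by
    by_cases h1 : ((m * u₀) * Complex.exp ((φ₁:ℂ) * Complex.I)).re = 0
    · refine ⟨φ₂, ⟨hφ₂m.1, hφ₂m.2⟩, ?_⟩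
      intro h2
      have hsp := zeros_spaced hm' h1 h2 hφne
      have : |φ₁ - φ₂| < π := by
        rw [abs_lt]
        constructor
        · have : t' - s' ≤ π/d := by
            rw [ht', hs'] at *
            rw [div_sub_div_same, div_le_div_iff₀ hdpos hdpos]
            nlinarith
          have hd1 : (1:ℝ) ≤ d := by exact_mod_cast Nat.one_le_of_lt hd
          have : t' - s' ≤ π := le_trans this (by
            rw [div_le_iff₀ hdpos]; nlinarith)
          rw [hφ₁, hφ₂]
          linarith
        · rw [hφ₁, hφ₂]
          linarith
      linarith
    · exact ⟨φ₁, ⟨hφ₁m.1, hφ₁m.2⟩, h1⟩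
  obtain ⟨φ, ⟨hφ1, hφ2⟩, hmz⟩ := hpick
  refine ⟨Complex.exp ((φ:ℂ) * Complex.I) * u₀, ?_, ?_, ?_, ?_⟩
  · rw [map_mul, habs, mul_one, Complex.abs_exp]; simp
  · rw [mul_unit_dir hl, Complex.re_ofReal_mul, Complex.exp_ofReal_mul_I_re]
    exact mul_pos (Complex.abs.pos hl) (Real.cos_pos_of_mem_Ioo (hmem φ hφ1 hφ2))
  · have : m * (Complex.exp ((φ:ℂ) * Complex.I) * u₀)
        = (m * u₀) * Complex.exp ((φ:ℂ) * Complex.I) := by ring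
    rw [this]
    exact hmz
  · have hvd : (Complex.exp ((φ:ℂ) * Complex.I) * u₀)^d
        = Complex.exp (((d * φ : ℝ) : ℂ) * Complex.I) * u₀^d := by
      rw [mul_pow, ← Complex.exp_nat_mul]
      push_cast
      ring_nf
    rw [hvd, show M * (Complex.exp (((d * φ : ℝ):ℂ) * Complex.I) * u₀^d)
        = (M * u₀^d) * Complex.exp (((d * φ : ℝ):ℂ) * Complex.I) by ring]
    exact hMneg φ hφ1 hφ2


lemma subexp_bound {β : ℝ} (hβ0 : 0 < β) (hβ1 : β < 1) {A nn ε : ℝ} (hA : 0 ≤ A)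
    (hn : 0 ≤ nn) (hε : 0 < ε) :
    ∃ C : ℝ, 1 ≤ C ∧ ∀ t : ℝ, 0 ≤ t → Real.exp (nn * (t + A) ^ β) ≤ C * Real.exp (ε * t) := by
  have hlim : Tendsto (fun t : ℝ => (2*nn+1) * t ^ (β - 1)) atTop (nhds 0) := by
    have h0 := tendsto_rpow_neg_atTop (y := 1 - β) (by linarith)
    have h1 : Tendsto (fun t : ℝ => t ^ (β - 1)) atTop (nhds 0) := by
      simpa [neg_sub] using h0
    simpa using h1.const_mul (2*nn+1)
  have hev : ∀ᶠ t : ℝ in atTop, nn * (t + A)^β ≤ ε * t := by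
    have h2 : ∀ᶠ t : ℝ in atTop, (2*nn+1) * t ^ (β - 1) < ε := hlim.eventually_lt_const hε
    filter_upwards [h2, eventually_ge_atTop (max A 1)] with t h2t hta
    have ht1 : (1:ℝ) ≤ t := le_trans (le_max_right _ _) hta
    have htA : A ≤ t := le_trans (le_max_left _ _) hta
    have ht0 : (0:ℝ) < t := by linarith
    have hc1 : (t + A)^β ≤ (2*t)^β :=
      Real.rpow_le_rpow (by linarith) (by linarith) hβ0.le
    have hc2 : (2*t)^β = (2:ℝ)^β * t^β := Real.mul_rpow (by norm_num) ht0.le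
    have hc3 : (2:ℝ)^β ≤ 2 := by
      calc (2:ℝ)^β ≤ (2:ℝ)^(1:ℝ) := Real.rpow_le_rpow_of_exponent_le (by norm_num) hβ1.le
        _ = 2 := Real.rpow_one 2
    have hc4 : t^β = t^(β-1) * t := by
      rw [Real.rpow_sub ht0, Real.rpow_one]
      field_simp
    have htβ : (0:ℝ) ≤ t^(β-1) := Real.rpow_nonneg ht0.le _
    have htβ2 : (0:ℝ) ≤ t^β := Real.rpow_nonneg ht0.le _
    calc nn * (t+A)^β ≤ nn * ((2:ℝ)^β * t^β) := by
          rw [← hc2]; exact mul_le_mul_of_nonneg_left hc1 hn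
      _ ≤ nn * (2 * t^β) := by
          apply mul_le_mul_of_nonneg_left (mul_le_mul_of_nonneg_right hc3 htβ2) hn
      _ = (2*nn) * t^(β-1) * t := by rw [hc4]; ring
      _ ≤ (2*nn+1) * t^(β-1) * t := by
          have : (0:ℝ) ≤ t^(β-1) * t := mul_nonneg htβ ht0.le
          nlinarith
      _ ≤ ε * t := mul_le_mul_of_nonneg_right h2t.le ht0.le
  obtain ⟨T, hT⟩ := eventually_atTop.1 hev
  set T' := max T 0 with hT'
  refine ⟨Real.exp (nn * (T' + A)^β) + 1, by linarith [Real.exp_pos (nn * (T' + A)^β)], ?_⟩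
  intro t ht
  rcases le_total t T' with h | h
  · have h1 : nn * (t+A)^β ≤ nn * (T'+A)^β := by
      apply mul_le_mul_of_nonneg_left _ hn
      exact Real.rpow_le_rpow (by linarith) (by linarith) hβ0.le
    have h2 : (1:ℝ) ≤ Real.exp (ε * t) := Real.one_le_exp (by positivity)
    calc Real.exp (nn * (t+A)^β) ≤ Real.exp (nn * (T'+A)^β) := Real.exp_le_exp.2 h1
      _ = Real.exp (nn * (T'+A)^β) * 1 := (mul_one _).symm
      _ ≤ (Real.exp (nn * (T'+A)^β) + 1) * Real.exp (ε * t) := by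
          have := Real.exp_pos (nn * (T'+A)^β)
          nlinarith
  · have h1 : Real.exp (nn * (t+A)^β) ≤ Real.exp (ε * t) :=
      Real.exp_le_exp.2 (hT t (le_trans (le_max_left _ _) h))
    have h2 := Real.exp_pos (ε * t)
    have h3 := Real.exp_pos (nn * (T'+A)^β)
    nlinarith

lemma pow_le_exp_aux {x ε : ℝ} (hx : 0 ≤ x) (hε : 0 < ε) (i : ℕ) :
    x^i ≤ (Nat.factorial i) * ε⁻¹^i * Real.exp (ε * x) := by
  have h1 : (ε*x)^i / (Nat.factorial i) ≤ Real.exp (ε*x) := by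
    have h2 : ∀ j ∈ Finset.range (i+1), (0:ℝ) ≤ (ε*x)^j / (Nat.factorial j) := by
      intro j _; positivity
    have h3 := Finset.single_le_sum h2 (Finset.self_mem_range_succ i)
    exact le_trans h3 (Real.sum_le_exp_of_nonneg (by positivity) (i+1))
  have hfac : (0:ℝ) < (Nat.factorial i : ℝ) := by
    exact_mod_cast Nat.factorial_pos i
  rw [div_le_iff₀ hfac] at h1
  have hx' : x^i = (ε*x)^i * ε⁻¹^i := by
    rw [← mul_pow]
    congr 1
    field_simp
  rw [hx']
  calc (ε*x)^i * ε⁻¹^i ≤ (Real.exp (ε*x) * Nat.factorial i) * ε⁻¹^i := by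
        apply mul_le_mul_of_nonneg_right h1 (by positivity)
    _ = (Nat.factorial i) * ε⁻¹^i * Real.exp (ε * x) := by ring

lemma poly_exp_bound (q : Polynomial ℂ) {ε : ℝ} (hε : 0 < ε) :
    ∃ C : ℝ, 0 < C ∧ ∀ z : ℂ, Complex.abs (q.eval z) ≤ C * Real.exp (ε * Complex.abs z) := by
  refine ⟨(∑ i ∈ Finset.range (q.natDegree+1),
      Complex.abs (q.coeff i) * ((Nat.factorial i) * ε⁻¹^i)) + 1, by positivity, ?_⟩
  intro z
  rw [Polynomial.eval_eq_sum_range]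
  have hexp : (0:ℝ) < Real.exp (ε * Complex.abs z) := Real.exp_pos _
  calc Complex.abs (∑ i ∈ Finset.range (q.natDegree+1), q.coeff i * z ^ i)
      ≤ ∑ i ∈ Finset.range (q.natDegree+1), Complex.abs (q.coeff i * z ^ i) :=
        Complex.abs.sum_le _ _
    _ = ∑ i ∈ Finset.range (q.natDegree+1), Complex.abs (q.coeff i) * (Complex.abs z) ^ i := by
        apply Finset.sum_congr rfl
        intro i _
        rw [map_mul, map_pow]
    _ ≤ ∑ i ∈ Finset.range (q.natDegree+1),
          Complex.abs (q.coeff i) * ((Nat.factorial i) * ε⁻¹^i) * Real.exp (ε * Complex.abs z) := by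
        apply Finset.sum_le_sum
        intro i _
        rw [mul_assoc]
        apply mul_le_mul_of_nonneg_left _ (Complex.abs.nonneg _)
        exact pow_le_exp_aux (Complex.abs.nonneg z) hε i
    _ = (∑ i ∈ Finset.range (q.natDegree+1),
          Complex.abs (q.coeff i) * ((Nat.factorial i) * ε⁻¹^i)) * Real.exp (ε * Complex.abs z) := by
        rw [Finset.sum_mul]
    _ ≤ _ := by nlinarith [Finset.sum_nonneg (fun i (_ : i ∈ Finset.range (q.natDegree+1)) =>
          mul_nonneg (Complex.abs.nonneg (q.coeff i))
            (mul_nonneg (by positivity : (0:ℝ) ≤ (Nat.factorial i : ℝ)) (by positivity)))]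

lemma poly_lower_bound (q : Polynomial ℂ) (hq : q ≠ 0) :
    ∃ cq Rq : ℝ, 0 < cq ∧ 0 ≤ Rq ∧ ∀ z : ℂ, Rq ≤ Complex.abs z → cq ≤ Complex.abs (q.eval z) := by
  by_cases hdeg : q.natDegree = 0
  · obtain ⟨a, ha⟩ : ∃ a, q = Polynomial.C a := ⟨q.coeff 0, Polynomial.eq_C_of_natDegree_eq_zero hdeg⟩
    have ha0 : a ≠ 0 := by
      intro h0
      exact hq (by rw [ha, h0, map_zero])
    refine ⟨Complex.abs a, 0, Complex.abs.pos ha0, le_refl _, fun z _ => ?_⟩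
    rw [ha, Polynomial.eval_C]
  · have hdeg' : 0 < q.degree := Polynomial.natDegree_pos_iff_degree_pos.1 (Nat.pos_of_ne_zero hdeg)
    have htend : Tendsto (fun z : ℂ => Complex.abs (q.eval z))
        (Filter.comap Complex.abs Filter.atTop) Filter.atTop := by
      exact Polynomial.tendsto_abv_atTop Complex.abs q hdeg' (z := id) tendsto_comap
    have hev : ∀ᶠ z in Filter.comap Complex.abs Filter.atTop, 1 ≤ Complex.abs (q.eval z) :=
      htend.eventually_ge_atTop 1
    rw [eventually_comap] at hev
    obtain ⟨R, hR⟩ := eventually_atTop.1 hev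
    exact ⟨1, max R 0, one_pos, le_max_right _ _,
      fun z hz => hR (Complex.abs z) (le_trans (le_max_left _ _) hz) z rfl⟩

lemma le_maxModulus {f : ℂ → ℂ} (hf : Continuous f) (z : ℂ) :
    Complex.abs (f z) ≤ maxModulus f (Complex.abs z) := by
  apply le_csSup
  · apply IsCompact.bddAbove_image (isCompact_sphere 0 (Complex.abs z))
    exact (Complex.continuous_abs.comp hf).continuousOn
  · apply Set.mem_image_of_mem
    simp [Complex.dist_eq]; rfl

lemma growth_bound {f : ℂ → ℂ} (hf : Differentiable ℂ f)
    (ho : growthOrder f < ((1:ℝ):EReal)) :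
    ∃ β C₀ : ℝ, 0 < β ∧ β < 1 ∧ 1 ≤ C₀ ∧
      ∀ z : ℂ, Complex.abs (f z) ≤ C₀ * Real.exp (Complex.abs z ^ β) := by
  obtain ⟨γ, hγ1, hγ2⟩ := exists_between ho
  have hγt : γ ≠ ⊤ := (hγ2.trans (EReal.coe_lt_top 1)).ne
  have hγb : γ ≠ ⊥ := by
    intro h
    rw [h] at hγ1
    exact absurd hγ1 (by simp)
  set β := max (1/2) γ.toReal with hβ
  have hβ0 : (0:ℝ) < β := lt_of_lt_of_le one_half_pos (le_max_left _ _)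
  have hβ1 : β < 1 := by
    apply max_lt (by norm_num)
    have : (γ.toReal : EReal) < ((1:ℝ) : EReal) := by rwa [EReal.coe_toReal hγt hγb]
    exact_mod_cast this
  have hev : ∀ᶠ r : ℝ in atTop, Real.log (Real.log (maxModulus f r)) / Real.log r < β := by
    have h1 := eventually_lt_of_limsup_lt hγ1
    filter_upwards [h1] with r hr
    have h2 : ((Real.log (Real.log (maxModulus f r)) / Real.log r : ℝ) : EReal)
        < ((γ.toReal : ℝ) : EReal) := by rwa [EReal.coe_toReal hγt hγb]
    exact lt_of_lt_of_le (by exact_mod_cast h2) (le_max_right _ _)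
  obtain ⟨R₁, hR₁⟩ := eventually_atTop.1 hev
  set R₀ := max R₁ 3 with hR₀
  have hbig : ∀ z : ℂ, R₀ ≤ Complex.abs z →
      Complex.abs (f z) ≤ Real.exp (Complex.abs z ^ β) := by
    intro z hz
    set r := Complex.abs z with hr
    have hr3 : (3:ℝ) ≤ r := le_trans (le_max_right _ _) hz
    have hr0 : (0:ℝ) < r := by linarith
    have hlogr : 1 < Real.log r := by
      rw [Real.lt_log_iff_exp_lt hr0]
      calc Real.exp 1 < 2.7182818286 := Real.exp_one_lt_d9
        _ ≤ 3 := by norm_num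
        _ ≤ r := hr3
    have hM := le_maxModulus hf.continuous z
    have hlt := hR₁ r (le_trans (le_max_left _ _) hz)
    by_contra hcon
    push_neg at hcon
    set Mr := maxModulus f r with hMr
    have hM1 : Real.exp (r^β) < Mr := lt_of_lt_of_le hcon hM
    have hrβ1 : (1:ℝ) ≤ r^β := by
      rw [show (1:ℝ) = r ^ (0:ℝ) by rw [Real.rpow_zero]]
      exact Real.rpow_le_rpow_of_exponent_le (by linarith) hβ0.le
    have hMr0 : (0:ℝ) < Mr := lt_trans (Real.exp_pos _) hM1
    have hlogM : r^β < Real.log Mr := (Real.lt_log_iff_exp_lt hMr0).2 hM1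
    have h2 : Real.log (r^β) < Real.log (Real.log Mr) :=
      Real.log_lt_log (by positivity) hlogM
    rw [Real.log_rpow hr0] at h2
    rw [div_lt_iff₀ (by linarith)] at hlt
    linarith
  obtain ⟨C, hC⟩ : ∃ C, ∀ y ∈ (fun z => Complex.abs (f z)) '' Metric.closedBall (0:ℂ) R₀, y ≤ C := by
    obtain ⟨C, hC⟩ := ((isCompact_closedBall (0:ℂ) R₀).image
      (Complex.continuous_abs.comp hf.continuous)).bddAbove
    exact ⟨C, fun y hy => hC hy⟩
  refine ⟨β, max C 1, hβ0, hβ1, le_max_right _ _, ?_⟩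
  intro z
  by_cases hz : R₀ ≤ Complex.abs z
  · have h1 := hbig z hz
    have h2 : (1:ℝ) ≤ max C 1 := le_max_right _ _
    nlinarith [Real.exp_pos (Complex.abs z ^ β)]
  · push_neg at hz
    have hmem : z ∈ Metric.closedBall (0:ℂ) R₀ := by
      simp [Complex.dist_eq]
      exact hz.le
    have h1 : Complex.abs (f z) ≤ C := hC _ (Set.mem_image_of_mem _ hmem)
    have h2 : (1:ℝ) ≤ Real.exp (Complex.abs z ^ β) := Real.one_le_exp (by positivity)
    have h3 : C ≤ max C 1 := le_max_left _ _
    nlinarith [le_max_right C 1]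


lemma reQ_expansion (Q : Polynomial ℂ) (v : ℂ) (r : ℝ) :
    (Q.eval ((r:ℂ)*v)).re
      = ∑ j ∈ Finset.range (Q.natDegree+1), (Q.coeff j * v^j).re * r^j := by
  rw [Polynomial.eval_eq_sum_range, Complex.re_sum]
  apply Finset.sum_congr rfl
  intro j _
  have h : Q.coeff j * ((r:ℂ)*v)^j = ((r^j : ℝ):ℂ) * (Q.coeff j * v^j) := by
    push_cast
    ring
  rw [h, Complex.re_ofReal_mul]
  ring

lemma ray_lower (q Q : Polynomial ℂ) (g F : ℂ → ℂ) (P₁ P₂ L₁ L₂ : ℂ) (hP₁ : P₁ ≠ 0)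
    (hFg : ∀ ε : ℝ, 0 < ε → ∃ C, 0 < C ∧ ∀ z : ℂ,
        Complex.abs (F z) ≤ C * Real.exp (ε * Complex.abs z) ∧
        Complex.abs (g z) ≤ C * Real.exp (ε * Complex.abs z))
    (heq : ∀ z : ℂ, q.eval z * Complex.exp (Q.eval z) * g z
        = P₁ * Complex.exp (L₁ * z) + P₂ * Complex.exp (L₂ * z) - F z)
    {v : ℂ} (hv : Complex.abs v = 1) (h1 : 0 < (L₁*v).re) (h2 : (L₂*v).re < (L₁*v).re)
    {ε : ℝ} (hε0 : 0 < ε) (hεa : ε < (L₁*v).re) :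
    ∃ C' R' : ℝ, 0 ≤ R' ∧ ∀ r : ℝ, R' ≤ r →
      ((L₁*v).re - 2*ε) * r - C' ≤ (Q.eval ((r:ℂ)*v)).re := by
  obtain ⟨Cq, hCq0, hCq⟩ := poly_exp_bound q hε0
  obtain ⟨CF, hCF0, hCF⟩ := hFg ε hε0
  set κ₁ := (L₁*v).re with hκ₁
  set κ₂ := (L₂*v).re with hκ₂
  have habs_sub : ∀ a b : ℂ, Complex.abs (a - b) ≤ Complex.abs a + Complex.abs b := fun a b => by
    simpa [sub_eq_add_neg] using Complex.abs.add_le a (-b)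
  -- threshold
  have htb : Tendsto (fun r : ℝ => Complex.abs P₂ * Real.exp ((κ₂ - κ₁)*r)
      + CF * Real.exp ((ε - κ₁)*r)) atTop (nhds 0) := by
    have m1 : Tendsto (fun r : ℝ => (κ₂ - κ₁)*r) atTop atBot := by
      apply Tendsto.const_mul_atTop_of_neg (by linarith) tendsto_id
    have m2 : Tendsto (fun r : ℝ => (ε - κ₁)*r) atTop atBot := by
      apply Tendsto.const_mul_atTop_of_neg (by linarith) tendsto_id
    have t1 := (Real.tendsto_exp_atBot.comp m1).const_mul (Complex.abs P₂)
    have t2 := (Real.tendsto_exp_atBot.comp m2).const_mul CF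
    have := t1.add t2
    simpa using this
  have hth : ∀ᶠ r : ℝ in atTop, Complex.abs P₂ * Real.exp ((κ₂ - κ₁)*r)
      + CF * Real.exp ((ε - κ₁)*r) < Complex.abs P₁ / 2 := by
    apply htb.eventually_lt_const
    have := Complex.abs.pos hP₁
    linarith
  obtain ⟨R₀, hR₀⟩ := eventually_atTop.1 hth
  refine ⟨Real.log (Cq * CF) - Real.log (Complex.abs P₁/2), max R₀ 0, le_max_right _ _, ?_⟩
  intro r hr
  have hr0 : (0:ℝ) ≤ r := le_trans (le_max_right _ _) hr
  set z := (r:ℂ)*v with hz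
  have habsz : Complex.abs z = r := by
    rw [hz, map_mul, Complex.abs_ofReal, hv, mul_one, abs_of_nonneg hr0]
  have hre : ∀ L : ℂ, (L * z).re = (L*v).re * r := by
    intro L
    rw [hz, show L * ((r:ℂ)*v) = (r:ℂ) * (L*v) by ring, Complex.re_ofReal_mul]
    ring
  have e1 : Complex.abs (P₁ * Complex.exp (L₁*z)) = Complex.abs P₁ * Real.exp (κ₁*r) := by
    rw [map_mul, Complex.abs_exp, hre]
  have e2 : Complex.abs (P₂ * Complex.exp (L₂*z)) = Complex.abs P₂ * Real.exp (κ₂*r) := by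
    rw [map_mul, Complex.abs_exp, hre]
  have e3 : Complex.abs (F z) ≤ CF * Real.exp (ε*r) := by
    have := (hCF z).1
    rwa [habsz] at this
  have eg : Complex.abs (g z) ≤ CF * Real.exp (ε*r) := by
    have := (hCF z).2
    rwa [habsz] at this
  have eq' : Complex.abs (q.eval z) ≤ Cq * Real.exp (ε*r) := by
    have := hCq z
    rwa [habsz] at this
  -- lower bound for the RHS
  have hth' := hR₀ r (le_trans (le_max_left _ _) hr)
  have hmulth : Complex.abs P₂ * Real.exp (κ₂*r) + CF * Real.exp (ε*r)
      ≤ Complex.abs P₁ / 2 * Real.exp (κ₁*r) := by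
    have hpos := Real.exp_pos (κ₁*r)
    have hgoal := mul_le_mul_of_nonneg_right hth'.le hpos.le
    have hid1 : Real.exp ((κ₂ - κ₁)*r) * Real.exp (κ₁*r) = Real.exp (κ₂*r) := by
      rw [← Real.exp_add]
      ring_nf
    have hid2 : Real.exp ((ε - κ₁)*r) * Real.exp (κ₁*r) = Real.exp (ε*r) := by
      rw [← Real.exp_add]
      ring_nf
    calc Complex.abs P₂ * Real.exp (κ₂*r) + CF * Real.exp (ε*r)
        = (Complex.abs P₂ * Real.exp ((κ₂ - κ₁)*r) + CF * Real.exp ((ε - κ₁)*r))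
            * Real.exp (κ₁*r) := by
          rw [add_mul, mul_assoc, mul_assoc, hid1, hid2]
      _ ≤ Complex.abs P₁ / 2 * Real.exp (κ₁*r) := hgoal
  have hRHS : Complex.abs P₁ / 2 * Real.exp (κ₁ * r)
      ≤ Complex.abs (P₁ * Complex.exp (L₁*z) + P₂ * Complex.exp (L₂*z) - F z) := by
    have h4 : P₁ * Complex.exp (L₁*z)
        = (P₁ * Complex.exp (L₁*z) + P₂ * Complex.exp (L₂*z) - F z)
          - (P₂ * Complex.exp (L₂*z) - F z) := by ring
    have h5 : Complex.abs (P₁ * Complex.exp (L₁*z))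
        ≤ Complex.abs (P₁ * Complex.exp (L₁*z) + P₂ * Complex.exp (L₂*z) - F z)
          + (Complex.abs (P₂ * Complex.exp (L₂*z)) + Complex.abs (F z)) := by
      calc Complex.abs (P₁ * Complex.exp (L₁*z))
          = Complex.abs ((P₁ * Complex.exp (L₁*z) + P₂ * Complex.exp (L₂*z) - F z)
            - (P₂ * Complex.exp (L₂*z) - F z)) := by rw [← h4]
        _ ≤ Complex.abs (P₁ * Complex.exp (L₁*z) + P₂ * Complex.exp (L₂*z) - F z)
            + Complex.abs (P₂ * Complex.exp (L₂*z) - F z) := habs_sub _ _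
        _ ≤ _ := by
            have := habs_sub (P₂ * Complex.exp (L₂*z)) (F z)
            linarith
    rw [e1, e2] at h5
    linarith
  -- upper bound
  have hupper : Complex.abs (q.eval z * Complex.exp (Q.eval z) * g z)
      ≤ Cq * CF * Real.exp (2*ε*r) * Real.exp ((Q.eval z).re) := by
    rw [map_mul, map_mul, Complex.abs_exp]
    have hexpQ := Real.exp_pos ((Q.eval z).re)
    have step1 : Complex.abs (q.eval z) * Real.exp ((Q.eval z).re) * Complex.abs (g z)
        ≤ (Cq * Real.exp (ε*r)) * Real.exp ((Q.eval z).re) * (CF * Real.exp (ε*r)) := by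
      apply mul_le_mul _ eg (Complex.abs.nonneg _) (by positivity)
      exact mul_le_mul_of_nonneg_right eq' hexpQ.le
    have step2 : (Cq * Real.exp (ε*r)) * Real.exp ((Q.eval z).re) * (CF * Real.exp (ε*r))
        = Cq * CF * (Real.exp (ε*r) * Real.exp (ε*r)) * Real.exp ((Q.eval z).re) := by ring
    have step3 : Real.exp (ε*r) * Real.exp (ε*r) = Real.exp (2*ε*r) := by
      rw [← Real.exp_add]
      ring_nf
    rw [step2, step3] at step1
    exact step1
  have heqz := heq z
  rw [heqz] at hupper
  have hcomb : Complex.abs P₁ / 2 * Real.exp (κ₁*r)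
      ≤ Cq * CF * Real.exp (2*ε*r) * Real.exp ((Q.eval z).re) := le_trans hRHS hupper
  -- take logs
  have hP₁2 : (0:ℝ) < Complex.abs P₁ / 2 := by
    have := Complex.abs.pos hP₁
    linarith
  have hlog := Real.log_le_log (by positivity) hcomb
  rw [Real.log_mul (ne_of_gt hP₁2) (ne_of_gt (Real.exp_pos _)), Real.log_exp] at hlog
  rw [Real.log_mul (by positivity) (ne_of_gt (Real.exp_pos _)),
    Real.log_mul (by positivity) (ne_of_gt (Real.exp_pos _)),
    Real.log_exp, Real.log_exp] at hlog
  linarith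

lemma ray_coeff_nonneg (q Q : Polynomial ℂ) (g F : ℂ → ℂ) (P₁ P₂ L₁ L₂ : ℂ) (hP₁ : P₁ ≠ 0)
    (hFg : ∀ ε : ℝ, 0 < ε → ∃ C, 0 < C ∧ ∀ z : ℂ,
        Complex.abs (F z) ≤ C * Real.exp (ε * Complex.abs z) ∧
        Complex.abs (g z) ≤ C * Real.exp (ε * Complex.abs z))
    (heq : ∀ z : ℂ, q.eval z * Complex.exp (Q.eval z) * g z
        = P₁ * Complex.exp (L₁ * z) + P₂ * Complex.exp (L₂ * z) - F z)
    {v : ℂ} (hv : Complex.abs v = 1) (h1 : 0 < (L₁*v).re) (h2 : (L₂*v).re < (L₁*v).re)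
    (hQd : 1 ≤ Q.natDegree) :
    0 ≤ (Q.coeff Q.natDegree * v ^ Q.natDegree).re := by
  by_contra hneg
  push_neg at hneg
  set η := -(Q.coeff Q.natDegree * v ^ Q.natDegree).re with hη
  have hη0 : 0 < η := by rw [hη]; linarith
  set κ₁ := (L₁*v).re with hκ₁
  set κ₂ := (L₂*v).re with hκ₂
  set ε := min (κ₁/4) ((κ₁ - κ₂)/4) with hε
  have hε0 : 0 < ε := lt_min (by linarith) (by linarith)
  have hεa : ε < κ₁ := lt_of_le_of_lt (min_le_left _ _) (by linarith)
  have hε2 : 2*ε ≤ κ₁/2 := by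
    have := min_le_left (κ₁/4) ((κ₁ - κ₂)/4)
    rw [hε]; linarith
  obtain ⟨C', R', hR'0, hlow⟩ := ray_lower q Q g F P₁ P₂ L₁ L₂ hP₁ hFg heq hv h1 h2 hε0 hεa
  set d := Q.natDegree with hd
  set B := ∑ j ∈ Finset.range d, Complex.abs (Q.coeff j) with hB
  have hB0 : 0 ≤ B := Finset.sum_nonneg fun j _ => Complex.abs.nonneg _
  have hupper : ∀ r : ℝ, 1 ≤ r →
      (Q.eval ((r:ℂ)*v)).re ≤ B * r^(d-1) - η * r^d := by
    intro r hr1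
    have hr0 : (0:ℝ) < r := by linarith
    rw [reQ_expansion, Finset.sum_range_succ]
    have htop : (Q.coeff d * v^d).re * r^d = -(η * r^d) := by
      rw [hη]; ring
    rw [htop]
    have hsum : ∑ j ∈ Finset.range d, (Q.coeff j * v^j).re * r^j ≤ B * r^(d-1) := by
      rw [hB, Finset.sum_mul]
      apply Finset.sum_le_sum
      intro j hj
      have hj' : j ≤ d - 1 := by
        have := Finset.mem_range.1 hj
        omega
      have hterm : (Q.coeff j * v^j).re ≤ Complex.abs (Q.coeff j) := by
        calc (Q.coeff j * v^j).re ≤ |(Q.coeff j * v^j).re| := le_abs_self _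
          _ ≤ Complex.abs (Q.coeff j * v^j) := Complex.abs_re_le_abs _
          _ = Complex.abs (Q.coeff j) := by rw [map_mul, map_pow, hv, one_pow, mul_one]
      have hpow : r^j ≤ r^(d-1) := pow_le_pow_right₀ hr1 hj'
      have h0 : (0:ℝ) ≤ r^j := by positivity
      calc (Q.coeff j * v^j).re * r^j ≤ Complex.abs (Q.coeff j) * r^j :=
            mul_le_mul_of_nonneg_right hterm h0
        _ ≤ Complex.abs (Q.coeff j) * r^(d-1) :=
            mul_le_mul_of_nonneg_left hpow (Complex.abs.nonneg _)
    linarith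
  -- choose a large r
  set r := max (max R' 1) (max (2*B/η + 1) (2*C'/κ₁ + 1)) with hrdef
  have hrR' : R' ≤ r := le_trans (le_max_left _ _) (le_max_left _ _)
  have hr1 : (1:ℝ) ≤ r := le_trans (le_max_right _ _) (le_max_left _ _)
  have hr0 : (0:ℝ) < r := by linarith
  have hrB : 2*B/η + 1 ≤ r := le_trans (le_max_left _ _) (le_max_right _ _)
  have hrC : 2*C'/κ₁ + 1 ≤ r := le_trans (le_max_right _ _) (le_max_right _ _)
  have hηr : 2*B ≤ η * r := by
    rw [div_add' _ _ _ (ne_of_gt hη0)] at hrB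
    have := (div_le_iff₀ hη0).1 hrB
    nlinarith
  have hκr : C' ≤ κ₁/2 * r := by
    rw [div_add' _ _ _ (by linarith : κ₁ ≠ 0)] at hrC
    have := (div_le_iff₀ (by linarith : (0:ℝ) < κ₁)).1 hrC
    nlinarith
  have hlow' := hlow r hrR'
  have hup' := hupper r hr1
  -- r^d = r * r^(d-1), and r ≤ r^d
  have hdd : d = (d-1) + 1 := by omega
  have hpowsplit : r^d = r^(d-1) * r := by
    conv_lhs => rw [hdd]
    rw [pow_succ]
  have hrpow : r ≤ r^d := le_self_pow₀ hr1 (by omega)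
  have hpow0 : (0:ℝ) < r^(d-1) := by positivity
  -- combine
  have c1 : κ₁/2 * r - C' ≤ (κ₁ - 2*ε) * r - C' := by nlinarith
  have c2 : B * r^(d-1) ≤ η/2 * r^d := by
    rw [hpowsplit]
    nlinarith
  have c3 : (Q.eval ((r:ℂ)*v)).re ≤ -(η/2) * r^d := by nlinarith
  have c4 : (0:ℝ) < η/2 * r^d := by positivity
  nlinarith

lemma ray_linear (q Q : Polynomial ℂ) (g F : ℂ → ℂ) (P₁ P₂ L₁ L₂ : ℂ) (hP₁ : P₁ ≠ 0)
    (hFg : ∀ ε : ℝ, 0 < ε → ∃ C, 0 < C ∧ ∀ z : ℂ,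
        Complex.abs (F z) ≤ C * Real.exp (ε * Complex.abs z) ∧
        Complex.abs (g z) ≤ C * Real.exp (ε * Complex.abs z))
    (heq : ∀ z : ℂ, q.eval z * Complex.exp (Q.eval z) * g z
        = P₁ * Complex.exp (L₁ * z) + P₂ * Complex.exp (L₂ * z) - F z)
    {v : ℂ} (hv : Complex.abs v = 1) (h1 : 0 < (L₁*v).re) (h2 : (L₂*v).re < (L₁*v).re)
    (hQ1 : Q.natDegree = 1) :
    (L₁*v).re ≤ (Q.coeff 1 * v).re := by
  by_contra hlt
  push_neg at hlt
  set κ₁ := (L₁*v).re with hκ₁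
  set κ₂ := (L₂*v).re with hκ₂
  set ζ := κ₁ - (Q.coeff 1 * v).re with hζ
  have hζ0 : 0 < ζ := by rw [hζ]; linarith
  set ε := min (ζ/4) (min (κ₁/2) ((κ₁ - κ₂)/2)) with hε
  have hε0 : 0 < ε := lt_min (by linarith) (lt_min (by linarith) (by linarith))
  have hεa : ε < κ₁ := lt_of_le_of_lt (le_trans (min_le_right _ _) (min_le_left _ _)) (by linarith)
  have hεζ : 2*ε ≤ ζ/2 := by
    have := min_le_left (ζ/4) (min (κ₁/2) ((κ₁ - κ₂)/2))
    rw [hε]; linarith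
  obtain ⟨C', R', hR'0, hlow⟩ := ray_lower q Q g F P₁ P₂ L₁ L₂ hP₁ hFg heq hv h1 h2 hε0 hεa
  have hexp : ∀ r : ℝ, (Q.eval ((r:ℂ)*v)).re = (Q.coeff 0).re + (Q.coeff 1 * v).re * r := by
    intro r
    rw [reQ_expansion, hQ1]
    rw [Finset.sum_range_succ, Finset.sum_range_one]
    simp [pow_zero, pow_one]
  set a₀ := (Q.coeff 0).re with ha₀
  set r := max R' ((C' + a₀)/(ζ/2) + 1) with hrdef
  have hrR' : R' ≤ r := le_max_left _ _
  have hr2 : (C' + a₀)/(ζ/2) + 1 ≤ r := le_max_right _ _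
  have hr0 : (0:ℝ) ≤ r := le_trans hR'0 hrR'
  have hlow' := hlow r hrR'
  rw [hexp r] at hlow'
  -- (κ₁ - 2ε) r - C' ≤ a₀ + (κ₁ - ζ) r   so   (ζ - 2ε) r ≤ C' + a₀
  have hineq : (ζ - 2*ε) * r ≤ C' + a₀ := by
    have hcoeff : (Q.coeff 1 * v).re = κ₁ - ζ := by rw [hζ]; ring
    rw [hcoeff] at hlow'
    ring_nf at hlow' ⊢
    linarith
  have hζε : ζ/2 ≤ ζ - 2*ε := by linarith
  have h5 : ζ/2 * r ≤ (ζ - 2*ε) * r := mul_le_mul_of_nonneg_right hζε hr0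
  have h6 : C' + a₀ + ζ/2 ≤ ζ/2 * r := by
    have h7 := mul_le_mul_of_nonneg_left hr2 (by linarith : (0:ℝ) ≤ ζ/2)
    rw [mul_add, mul_one, mul_div_cancel₀ _ (by linarith : ζ/2 ≠ 0)] at h7
    linarith
  linarith


lemma deriv_bound {f : ℂ → ℂ} (hf : Differentiable ℂ f) {β C₀ : ℝ} (hβ0 : 0 ≤ β)
    (hC₀0 : 0 ≤ C₀)
    (hb : ∀ z, Complex.abs (f z) ≤ C₀ * Real.exp (Complex.abs z ^ β)) (z : ℂ) :
    Complex.abs (deriv f z) ≤ C₀ * Real.exp ((Complex.abs z + 1) ^ β) := by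
  have h := Complex.norm_deriv_le_of_forall_mem_sphere_norm_le (c := z) (R := 1) one_pos
    hf.diffContOnCl (C := C₀ * Real.exp ((Complex.abs z + 1) ^ β)) ?_
  · simpa [Complex.norm_eq_abs] using h
  · intro w hw
    have hd : Complex.abs (w - z) = 1 := by
      have h1 := Metric.mem_sphere.1 hw
      rwa [Complex.dist_eq] at h1
    have habsw : Complex.abs w ≤ Complex.abs z + 1 := by
      calc Complex.abs w = Complex.abs (z + (w - z)) := by ring_nf
        _ ≤ Complex.abs z + Complex.abs (w-z) := Complex.abs.add_le _ _
        _ = Complex.abs z + 1 := by rw [hd]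
    rw [Complex.norm_eq_abs]
    calc Complex.abs (f w) ≤ C₀ * Real.exp (Complex.abs w ^ β) := hb w
      _ ≤ C₀ * Real.exp ((Complex.abs z + 1) ^ β) := by
          apply mul_le_mul_of_nonneg_left _ hC₀0
          exact Real.exp_le_exp.2 (Real.rpow_le_rpow (Complex.abs.nonneg _) habsw hβ0)

lemma noise_bound {f : ℂ → ℂ} (hf : Differentiable ℂ f) {n : ℕ} (hn : 1 ≤ n)
    {β C₀ : ℝ} (hβ0 : 0 < β) (hβ1 : β < 1) (hC₀ : 1 ≤ C₀)
    (hb : ∀ z, Complex.abs (f z) ≤ C₀ * Real.exp (Complex.abs z ^ β))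
    (ω c : ℂ) {ε : ℝ} (hε : 0 < ε) :
    ∃ C, 0 < C ∧ ∀ z : ℂ,
      Complex.abs (f z ^ n + ω * f z ^ (n-1) * deriv f z)
          ≤ C * Real.exp (ε * Complex.abs z) ∧
      Complex.abs (f (z + c)) ≤ C * Real.exp (ε * Complex.abs z) := by
  have hC₀0 : (0:ℝ) < C₀ := lt_of_lt_of_le one_pos hC₀
  obtain ⟨C₁, hC₁1, hC₁⟩ := subexp_bound hβ0 hβ1 (A := 1) (nn := (n:ℝ)) zero_le_one
    (Nat.cast_nonneg n) hε
  obtain ⟨C₂, hC₂1, hC₂⟩ := subexp_bound hβ0 hβ1 (A := Complex.abs c) (nn := 1)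
    (Complex.abs.nonneg c) zero_le_one hε
  have hC₁0 : (0:ℝ) < C₁ := lt_of_lt_of_le one_pos hC₁1
  have hC₂0 : (0:ℝ) < C₂ := lt_of_lt_of_le one_pos hC₂1
  refine ⟨(1 + Complex.abs ω) * C₀^n * C₁ + C₀ * C₂, ?_, fun z => ⟨?_, ?_⟩⟩
  · have h1 : (0:ℝ) < 1 + Complex.abs ω := by
      have := Complex.abs.nonneg ω
      linarith
    have h2 : (0:ℝ) < C₀^n := pow_pos hC₀0 n
    nlinarith [mul_pos (mul_pos h1 h2) hC₁0, mul_pos hC₀0 hC₂0]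
  · -- the differential part
    set t := Complex.abs z with ht
    have ht0 : (0:ℝ) ≤ t := Complex.abs.nonneg z
    have hmono : Complex.abs z ^ β ≤ (Complex.abs z + 1) ^ β :=
      Real.rpow_le_rpow (Complex.abs.nonneg _) (by linarith) hβ0.le
    have hfz : Complex.abs (f z) ≤ C₀ * Real.exp ((t + 1) ^ β) :=
      le_trans (hb z) (mul_le_mul_of_nonneg_left (Real.exp_le_exp.2 hmono) hC₀0.le)
    have hd := deriv_bound hf hβ0.le hC₀0.le hb z
    have hbase : (0:ℝ) < C₀ * Real.exp ((t + 1) ^ β) := by positivity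
    have h1 : Complex.abs (f z ^ n) ≤ (C₀ * Real.exp ((t+1)^β))^n := by
      rw [map_pow]
      exact pow_le_pow_left₀ (Complex.abs.nonneg _) hfz n
    have h2 : Complex.abs (ω * f z ^ (n-1) * deriv f z)
        ≤ Complex.abs ω * (C₀ * Real.exp ((t+1)^β))^n := by
      rw [map_mul, map_mul, map_pow]
      have hp : (Complex.abs (f z))^(n-1) ≤ (C₀ * Real.exp ((t+1)^β))^(n-1) :=
        pow_le_pow_left₀ (Complex.abs.nonneg _) hfz (n-1)
      calc Complex.abs ω * (Complex.abs (f z))^(n-1) * Complex.abs (deriv f z)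
          ≤ Complex.abs ω * (C₀ * Real.exp ((t+1)^β))^(n-1)
            * (C₀ * Real.exp ((t+1)^β)) := by
            apply mul_le_mul _ hd (Complex.abs.nonneg _) (by positivity)
            exact mul_le_mul_of_nonneg_left hp (Complex.abs.nonneg ω)
        _ = Complex.abs ω * (C₀ * Real.exp ((t+1)^β))^n := by
            rw [mul_assoc, ← pow_succ, Nat.sub_add_cancel hn]
    have hexpn : (C₀ * Real.exp ((t+1)^β))^n = C₀^n * Real.exp ((n:ℝ) * (t+1)^β) := by
      rw [mul_pow, ← Real.exp_nat_mul]
    have htri : Complex.abs (f z ^ n + ω * f z ^ (n-1) * deriv f z)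
        ≤ (1 + Complex.abs ω) * (C₀^n * Real.exp ((n:ℝ) * (t+1)^β)) := by
      have h3 := Complex.abs.add_le (f z ^ n) (ω * f z ^ (n-1) * deriv f z)
      rw [hexpn] at h1 h2
      have h4 : (0:ℝ) ≤ C₀^n * Real.exp ((n:ℝ) * (t+1)^β) := by positivity
      nlinarith
    have h5 := hC₁ t ht0
    calc Complex.abs (f z ^ n + ω * f z ^ (n-1) * deriv f z)
        ≤ (1 + Complex.abs ω) * (C₀^n * Real.exp ((n:ℝ) * (t+1)^β)) := htri
      _ ≤ (1 + Complex.abs ω) * (C₀^n * (C₁ * Real.exp (ε * t))) := by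
          apply mul_le_mul_of_nonneg_left _ (by positivity)
          exact mul_le_mul_of_nonneg_left h5 (by positivity)
      _ = (1 + Complex.abs ω) * C₀^n * C₁ * Real.exp (ε * t) := by ring
      _ ≤ ((1 + Complex.abs ω) * C₀^n * C₁ + C₀ * C₂) * Real.exp (ε * t) := by
          nlinarith [mul_pos (mul_pos hC₀0 hC₂0) (Real.exp_pos (ε * t))]
  · set t := Complex.abs z with ht
    have ht0 : (0:ℝ) ≤ t := Complex.abs.nonneg z
    have h1 : Complex.abs (z + c) ≤ t + Complex.abs c := Complex.abs.add_le _ _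
    have h2 : Complex.abs (f (z+c)) ≤ C₀ * Real.exp ((t + Complex.abs c)^β) := by
      calc Complex.abs (f (z+c)) ≤ C₀ * Real.exp (Complex.abs (z+c) ^ β) := hb _
        _ ≤ C₀ * Real.exp ((t + Complex.abs c)^β) := by
            apply mul_le_mul_of_nonneg_left _ hC₀0.le
            exact Real.exp_le_exp.2 (Real.rpow_le_rpow (Complex.abs.nonneg _) h1 hβ0.le)
    have h3 := hC₂ t ht0
    rw [one_mul] at h3
    calc Complex.abs (f (z+c)) ≤ C₀ * Real.exp ((t + Complex.abs c)^β) := h2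
      _ ≤ C₀ * (C₂ * Real.exp (ε * t)) := mul_le_mul_of_nonneg_left h3 hC₀0.le
      _ = C₀ * C₂ * Real.exp (ε * t) := by ring
      _ ≤ ((1 + Complex.abs ω) * C₀^n * C₁ + C₀ * C₂) * Real.exp (ε * t) := by
          have hp1 : (0:ℝ) ≤ (1 + Complex.abs ω) * C₀^n * C₁ := by positivity
          nlinarith [mul_nonneg hp1 (Real.exp_pos (ε * t)).le]

-- growth bound in the `2 * |z|^β` form, for a shifted function
lemma shift_growth {f : ℂ → ℂ} {β C₀ : ℝ} (hβ0 : 0 < β) (hβ1 : β < 1) (hC₀ : 1 ≤ C₀)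
    (hb : ∀ z, Complex.abs (f z) ≤ C₀ * Real.exp (Complex.abs z ^ β)) (c : ℂ) :
    ∀ z, Complex.abs (f (z + c))
      ≤ (C₀ * Real.exp (2 * Complex.abs c ^ β)) * Real.exp (2 * Complex.abs z ^ β) := by
  intro z
  set A := Complex.abs c with hA
  have hA0 : (0:ℝ) ≤ A := Complex.abs.nonneg c
  set t := Complex.abs z with htdef
  have ht0 : (0:ℝ) ≤ t := Complex.abs.nonneg z
  have hC₀0 : (0:ℝ) < C₀ := lt_of_lt_of_le one_pos hC₀
  have key : (t + A)^β ≤ 2 * A^β + 2 * t^β := by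
    have h2β : (2:ℝ)^β ≤ 2 := by
      calc (2:ℝ)^β ≤ (2:ℝ)^(1:ℝ) := Real.rpow_le_rpow_of_exponent_le (by norm_num) hβ1.le
        _ = 2 := Real.rpow_one 2
    rcases le_total t A with hc | hc
    · have h1 : (t + A)^β ≤ (2*A)^β :=
        Real.rpow_le_rpow (by linarith) (by linarith) hβ0.le
      have h2 : (2*A)^β = (2:ℝ)^β * A^β := Real.mul_rpow (by norm_num) hA0
      have h3 : (0:ℝ) ≤ A^β := Real.rpow_nonneg hA0 _
      have h4 : (0:ℝ) ≤ t^β := Real.rpow_nonneg ht0 _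
      nlinarith
    · have h1 : (t + A)^β ≤ (2*t)^β :=
        Real.rpow_le_rpow (by linarith) (by linarith) hβ0.le
      have h2 : (2*t)^β = (2:ℝ)^β * t^β := Real.mul_rpow (by norm_num) ht0
      have h3 : (0:ℝ) ≤ A^β := Real.rpow_nonneg hA0 _
      have h4 : (0:ℝ) ≤ t^β := Real.rpow_nonneg ht0 _
      nlinarith
  have h1 : Complex.abs (z + c) ≤ t + A := Complex.abs.add_le _ _
  calc Complex.abs (f (z+c)) ≤ C₀ * Real.exp (Complex.abs (z+c) ^ β) := hb _
    _ ≤ C₀ * Real.exp ((t + A)^β) := by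
        apply mul_le_mul_of_nonneg_left _ hC₀0.le
        exact Real.exp_le_exp.2 (Real.rpow_le_rpow (Complex.abs.nonneg _) h1 hβ0.le)
    _ ≤ C₀ * Real.exp (2*A^β + 2*t^β) := by
        apply mul_le_mul_of_nonneg_left (Real.exp_le_exp.2 key) hC₀0.le
    _ = (C₀ * Real.exp (2 * A ^ β)) * Real.exp (2 * t ^ β) := by
        rw [mul_assoc, ← Real.exp_add]


lemma bounded_of_sector {g : ℂ → ℂ} (hg : Differentiable ℂ g) {β C₀ : ℝ}
    (hβ0 : 0 < β) (hβ1 : β < 1) (hC₀ : 0 < C₀)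
    (hgrow : ∀ z, Complex.abs (g z) ≤ C₀ * Real.exp (2 * Complex.abs z ^ β))
    {l : ℂ} (hl : l ≠ 0) {ψ : ℝ} (hψ0 : 0 < ψ) (hψ2 : ψ < π/2)
    (hψβ : β * (π + 2*ψ) < π)
    {K : ℝ} (hK : ∀ z : ℂ, Complex.abs l * Real.sin ψ * Complex.abs z ≤ (l*z).re
      → Complex.abs (g z) ≤ K) :
    ∀ z, Complex.abs (g z) ≤ K := by
  have hπ := Real.pi_pos
  set u₀ : ℂ := conj' l / (Complex.abs l : ℂ) with hu₀
  have habs : Complex.abs u₀ = 1 := abs_unit_dir hl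
  have hu₀0 : u₀ ≠ 0 := by
    intro h0; rw [h0] at habs; simp at habs
  set a : ℝ := π/2 - ψ with ha
  set b : ℝ := (π/2 + ψ) + π with hb
  have hab : b - a = π + 2*ψ := by rw [ha, hb]; ring
  set H : ℂ → ℂ := fun w => g (u₀ * Complex.exp w) with hH
  have hHd : Differentiable ℂ H :=
    hg.comp ((differentiable_const _).mul Complex.differentiable_exp)
  have habs_ue : ∀ w : ℂ, Complex.abs (u₀ * Complex.exp w) = Real.exp w.re := by
    intro w
    rw [map_mul, habs, one_mul, Complex.abs_exp]
  have hsec : ∀ w : ℂ, Real.sin ψ ≤ Real.cos w.im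
      → Complex.abs (g (u₀ * Complex.exp w)) ≤ K := by
    intro w hw
    apply hK
    have h1 : l * (u₀ * Complex.exp w) = (Complex.abs l : ℂ) * Complex.exp w := by
      rw [mul_comm u₀ (Complex.exp w)]
      exact mul_unit_dir hl (Complex.exp w)
    rw [h1, Complex.re_ofReal_mul, Complex.exp_re, habs_ue]
    have hexp := Real.exp_pos w.re
    have habsl := Complex.abs.nonneg l
    have hmul := mul_le_mul_of_nonneg_left hw (mul_nonneg habsl hexp.le)
    nlinarith
  have hstrip : ∀ w : ℂ, a ≤ w.im → w.im ≤ b → Complex.abs (H w) ≤ K := by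
    intro w hwa hwb
    have hPL := PhragmenLindelof.horizontal_strip (E := ℂ) (f := H) (a := a) (b := b) (C := K)
      (hHd.diffContOnCl) ?_ ?_ ?_ hwa hwb
    · rwa [Complex.norm_eq_abs] at hPL
    · refine ⟨β, ?_, 2, ?_⟩
      · rw [hab, lt_div_iff₀ (by linarith : (0:ℝ) < π + 2*ψ)]
        exact hψβ
      · apply Asymptotics.IsBigO.of_bound C₀
        apply Filter.Eventually.of_forall
        intro w
        rw [Real.norm_eq_abs, Real.abs_exp, Complex.norm_eq_abs]
        have h2 : Complex.abs (H w) ≤ C₀ * Real.exp (2 * (Real.exp w.re)^β) := by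
          rw [hH]
          have := hgrow (u₀ * Complex.exp w)
          rwa [habs_ue] at this
        have h3 : (Real.exp w.re)^β = Real.exp (β * w.re) := by
          rw [mul_comm β w.re, Real.exp_mul]
        have h4 : Real.exp (β * w.re) ≤ Real.exp (β * |w.re|) := by
          apply Real.exp_le_exp.2
          exact mul_le_mul_of_nonneg_left (le_abs_self _) hβ0.le
        calc Complex.abs (H w) ≤ C₀ * Real.exp (2 * (Real.exp w.re)^β) := h2
          _ ≤ C₀ * Real.exp (2 * Real.exp (β * |w.re|)) := by
              rw [h3]
              apply mul_le_mul_of_nonneg_left _ hC₀.le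
              apply Real.exp_le_exp.2
              linarith [Real.exp_pos (β * w.re), Real.exp_pos (β * |w.re|), h4]
    · intro w hwa'
      rw [Complex.norm_eq_abs]
      apply hsec
      rw [hwa', ha, Real.cos_pi_div_two_sub]
    · intro w hwb'
      rw [Complex.norm_eq_abs]
      apply hsec
      have : Real.cos b = Real.sin ψ := by
        rw [hb, Real.cos_add_pi]
        have : Real.cos (π/2 + ψ) = -Real.sin ψ := by
          rw [show π/2 + ψ = π/2 - (-ψ) by ring, Real.cos_pi_div_two_sub, Real.sin_neg]
        rw [this, neg_neg]
      rw [hwb', this]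
  intro z
  by_cases hz0 : z = 0
  · apply hK
    simp [hz0]
  · have hzu : z / u₀ ≠ 0 := div_ne_zero hz0 hu₀0
    set w := Complex.log (z / u₀) with hw
    have hexpw : Complex.exp w = z / u₀ := Complex.exp_log hzu
    have hzw : u₀ * Complex.exp w = z := by
      rw [hexpw]
      field_simp
    have him1 : -π < w.im := by rw [hw, Complex.log_im]; exact Complex.neg_pi_lt_arg _
    have him2 : w.im ≤ π := by rw [hw, Complex.log_im]; exact Complex.arg_le_pi _
    rcases le_or_gt a w.im with hcase1 | hcase1
    · have hb' : w.im ≤ b := by rw [hb]; linarith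
      have hHw : H w = g z := by simp only [hH]; rw [hzw]
      have := hstrip w hcase1 hb'
      rwa [hHw] at this
    · rcases le_or_gt w.im (-a) with hcase2 | hcase2
      · set w' := w + 2*π*Complex.I with hw'
        have hexp' : Complex.exp w' = Complex.exp w := by
          rw [hw', Complex.exp_add, Complex.exp_two_pi_mul_I, mul_one]
        have him' : w'.im = w.im + 2*π := by
          rw [hw']
          simp [Complex.add_im]
        have hwa : a ≤ w'.im := by rw [him', ha]; linarith
        have hwb : w'.im ≤ b := by rw [him', hb, ha] at *; linarith
        have hHw : H w' = g z := by simp only [hH]; rw [hexp', hzw]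
        have := hstrip w' hwa hwb
        rwa [hHw] at this
      · have habsim : |w.im| < a := abs_lt.2 ⟨by linarith, hcase1⟩
        have hcos : Real.sin ψ ≤ Real.cos w.im := by
          have h5 : Real.cos a < Real.cos |w.im| := by
            apply Real.cos_lt_cos_of_nonneg_of_le_pi (abs_nonneg _) _ habsim
            rw [ha]; linarith
          rw [Real.cos_abs] at h5
          rw [ha, Real.cos_pi_div_two_sub] at h5
          linarith
        have := hsec w hcos
        rwa [hzw] at this
  done


end StmtAux

open StmtAux

theorem stmt_5 (n : ℕ) (hn : 1 ≤ n) (ω : ℂ)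
    (c l₁ l₂ p₁ p₂ : ℂ) (hc : c ≠ 0) (hl₁ : l₁ ≠ 0) (hl₂ : l₂ ≠ 0)
    (hp₁ : p₁ ≠ 0) (hp₂ : p₂ ≠ 0) (hll : l₁ ≠ l₂)
    (q Q : Polynomial ℂ) (hq : q ≠ 0) (hQ : 1 ≤ Q.natDegree) :
    ¬ ∃ f : ℂ → ℂ,
      Differentiable ℂ f ∧
      (¬ ∃ p : Polynomial ℂ, ∀ z, f z = p.eval z) ∧
      growthOrder f < ((1 : ℝ) : EReal) ∧
      (∀ z : ℂ, f z ^ n + ω * f z ^ (n - 1) * deriv f z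
          + q.eval z * Complex.exp (Q.eval z) * f (z + c)
          = p₁ * Complex.exp (l₁ * z) + p₂ * Complex.exp (l₂ * z)) := by
  rintro ⟨f, hf, hpoly, ho, heqn⟩
  have hπ := Real.pi_pos
  obtain ⟨β, C₀, hβ0, hβ1, hC₀, hb⟩ := growth_bound hf ho
  set F : ℂ → ℂ := fun z => f z ^ n + ω * f z ^ (n-1) * deriv f z with hFdef
  set g : ℂ → ℂ := fun z => f (z + c) with hgdef
  have hgd : Differentiable ℂ g := hf.comp (differentiable_id.add_const c)
  have heq : ∀ z : ℂ, q.eval z * Complex.exp (Q.eval z) * g z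
      = p₁ * Complex.exp (l₁ * z) + p₂ * Complex.exp (l₂ * z) - F z := by
    intro z
    simp only [hFdef, hgdef]
    linear_combination (heqn z)
  have heq' : ∀ z : ℂ, q.eval z * Complex.exp (Q.eval z) * g z
      = p₂ * Complex.exp (l₂ * z) + p₁ * Complex.exp (l₁ * z) - F z := by
    intro z
    rw [heq z]
    ring
  have hFg : ∀ ε : ℝ, 0 < ε → ∃ C, 0 < C ∧ ∀ z : ℂ,
      Complex.abs (F z) ≤ C * Real.exp (ε * Complex.abs z) ∧
      Complex.abs (g z) ≤ C * Real.exp (ε * Complex.abs z) := by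
    intro ε hε
    obtain ⟨C, hC0, hC⟩ := noise_bound hf hn hβ0 hβ1 hC₀ hb ω c hε
    exact ⟨C, hC0, fun z => hC z⟩
  have hQ0 : Q ≠ 0 := by
    intro h0
    rw [h0] at hQ
    simp at hQ
  have hlead : Q.coeff Q.natDegree ≠ 0 := by
    have := Polynomial.leadingCoeff_ne_zero.2 hQ0
    rwa [Polynomial.leadingCoeff] at this
  have hsubne : l₁ - l₂ ≠ 0 := sub_ne_zero.2 hll
  rcases eq_or_lt_of_le hQ with hd1 | hd2
  · -- degree one case
    have hQ1 : Q.natDegree = 1 := hd1.symm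
    set bb : ℂ := Q.coeff 1 with hbbdef
    have hyp1 : ∀ v : ℂ, Complex.abs v = 1 → 0 < (l₁ * v).re → ((l₁ - l₂) * v).re ≠ 0 →
        0 ≤ ((bb - l₁) * v).re := by
      intro v hv h1v hmv
      have hsub : ((l₁ - l₂)*v).re = (l₁*v).re - (l₂*v).re := by
        rw [sub_mul, Complex.sub_re]
      have hne : (l₂*v).re ≠ (l₁*v).re := by
        intro h0
        apply hmv
        rw [hsub, h0]
        ring
      rw [sub_mul, Complex.sub_re]
      rcases lt_or_gt_of_ne hne with hlt | hgt
      · have hray := ray_linear q Q g F p₁ p₂ l₁ l₂ hp₁ hFg heq hv h1v hlt hQ1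
        linarith
      · have hray := ray_linear q Q g F p₂ p₁ l₂ l₁ hp₂ hFg heq' hv
          (lt_trans h1v hgt) hgt hQ1
        linarith
    have hyp2 : ∀ v : ℂ, Complex.abs v = 1 → 0 < (l₂ * v).re → ((l₂ - l₁) * v).re ≠ 0 →
        0 ≤ ((bb - l₂) * v).re := by
      intro v hv h2v hmv
      have hsub : ((l₂ - l₁)*v).re = (l₂*v).re - (l₁*v).re := by
        rw [sub_mul, Complex.sub_re]
      have hne : (l₁*v).re ≠ (l₂*v).re := by
        intro h0
        apply hmv
        rw [hsub, h0]
        ring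
      rw [sub_mul, Complex.sub_re]
      rcases lt_or_gt_of_ne hne with hlt | hgt
      · have hray := ray_linear q Q g F p₂ p₁ l₂ l₁ hp₂ hFg heq' hv h2v hlt hQ1
        linarith
      · have hray := ray_linear q Q g F p₁ p₂ l₁ l₂ hp₁ hFg heq hv
          (lt_trans h2v hgt) hgt hQ1
        linarith
    obtain ⟨t₁, ht₁0, ht₁⟩ := eq_nonneg_mul hl₁ hsubne hyp1
    obtain ⟨t₂, ht₂0, ht₂⟩ := eq_nonneg_mul hl₂ (sub_ne_zero.2 (Ne.symm hll)) hyp2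
    -- setup the sector
    have hβinv : π < π/β := by
      rw [lt_div_iff₀ hβ0]
      nlinarith
    set ψ : ℝ := min (π/8) ((π/β - π)/4) with hψdef
    have hψ0 : 0 < ψ := lt_min (by linarith) (by linarith)
    have hψ2 : ψ < π/2 := lt_of_le_of_lt (min_le_left _ _) (by linarith)
    have hψβ : β * (π + 2*ψ) < π := by
      have hψu : ψ ≤ (π/β - π)/4 := min_le_right _ _
      have h7 : β * (π/β) = π := by field_simp
      nlinarith [mul_le_mul_of_nonneg_left hψu hβ0.le]
    set δ : ℝ := Complex.abs l₁ * Real.sin ψ with hδdef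
    have hδ0 : 0 < δ :=
      mul_pos (Complex.abs.pos hl₁) (Real.sin_pos_of_pos_of_lt_pi hψ0 (by linarith))
    obtain ⟨Cδ, hCδ0, hCδ⟩ := hFg δ hδ0
    obtain ⟨cq, Rq, hcq0, hRq0, hql⟩ := poly_lower_bound q hq
    obtain ⟨K₂, hK₂⟩ : ∃ K₂, ∀ z : ℂ, Complex.abs z ≤ Rq → Complex.abs (g z) ≤ K₂ := by
      obtain ⟨C, hC⟩ := ((isCompact_closedBall (0:ℂ) Rq).image
        (Complex.continuous_abs.comp hgd.continuous)).bddAbove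
      refine ⟨C, fun z hz => hC (Set.mem_image_of_mem _ ?_)⟩
      simp [Complex.dist_eq]
      exact hz
    set a0re : ℝ := (Q.coeff 0).re with ha0def
    set S : ℝ := Complex.abs p₁ + Complex.abs p₂ + Cδ with hSdef
    have hS0 : 0 ≤ S := by
      have := Complex.abs.nonneg p₁
      have := Complex.abs.nonneg p₂
      rw [hSdef]
      linarith
    set K₁ : ℝ := S / (cq * Real.exp (-|a0re|)) with hK₁def
    have hQev : ∀ z : ℂ, Q.eval z = Q.coeff 0 + Q.coeff 1 * z := by
      intro z
      have h := Polynomial.eval_eq_sum_range (x := z) (p := Q)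
      rw [hQ1] at h
      rw [h, Finset.sum_range_succ, Finset.sum_range_one]
      simp
    have hbbeq1 : bb = ((1 + t₁ : ℝ) : ℂ) * l₁ := by
      rw [Complex.ofReal_add, Complex.ofReal_one]
      linear_combination ht₁
    have hbbeq2 : bb = ((1 + t₂ : ℝ) : ℂ) * l₂ := by
      rw [Complex.ofReal_add, Complex.ofReal_one]
      linear_combination ht₂
    have hbb1 : ∀ z : ℂ, (bb*z).re = (1+t₁) * (l₁*z).re := by
      intro z
      rw [hbbeq1, mul_assoc, Complex.re_ofReal_mul]
    have hbb2 : ∀ z : ℂ, (bb*z).re = (1+t₂) * (l₂*z).re := by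
      intro z
      rw [hbbeq2, mul_assoc, Complex.re_ofReal_mul]
    have habs_sub : ∀ a b : ℂ, Complex.abs (a - b) ≤ Complex.abs a + Complex.abs b :=
      fun a b => by simpa [sub_eq_add_neg] using Complex.abs.add_le a (-b)
    have hK : ∀ z : ℂ, Complex.abs l₁ * Real.sin ψ * Complex.abs z ≤ (l₁*z).re
        → Complex.abs (g z) ≤ max K₁ K₂ := by
      intro z hz
      by_cases hzR : Complex.abs z ≤ Rq
      · exact le_trans (hK₂ z hzR) (le_max_right _ _)
      · push_neg at hzR
        have hq1 : cq ≤ Complex.abs (q.eval z) := hql z hzR.le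
        have hl1z : 0 ≤ (l₁*z).re := by
          have : 0 ≤ Complex.abs l₁ * Real.sin ψ * Complex.abs z := by
            have := Complex.abs.nonneg z
            nlinarith
          linarith
        have hle1 : (l₁*z).re ≤ (bb*z).re := by
          rw [hbb1 z]
          nlinarith
        have hle2 : (l₂*z).re ≤ (bb*z).re := by
          rcases le_or_gt ((l₂*z).re) 0 with h | h
          · linarith
          · rw [hbb2 z]
            nlinarith
        have hδle : δ * Complex.abs z ≤ (bb*z).re := le_trans hz hle1
        have hE := congrArg Complex.abs (heq z)
        rw [map_mul, map_mul, Complex.abs_exp] at hE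
        have hFz := (hCδ z).1
        have hup : Complex.abs (p₁ * Complex.exp (l₁*z) + p₂ * Complex.exp (l₂*z) - F z)
            ≤ S * Real.exp ((bb*z).re) := by
          have t1 : Complex.abs (p₁ * Complex.exp (l₁*z))
              ≤ Complex.abs p₁ * Real.exp ((bb*z).re) := by
            rw [map_mul, Complex.abs_exp]
            exact mul_le_mul_of_nonneg_left (Real.exp_le_exp.2 hle1) (Complex.abs.nonneg _)
          have t2 : Complex.abs (p₂ * Complex.exp (l₂*z))
              ≤ Complex.abs p₂ * Real.exp ((bb*z).re) := by
            rw [map_mul, Complex.abs_exp]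
            exact mul_le_mul_of_nonneg_left (Real.exp_le_exp.2 hle2) (Complex.abs.nonneg _)
          have t3 : Complex.abs (F z) ≤ Cδ * Real.exp ((bb*z).re) := by
            calc Complex.abs (F z) ≤ Cδ * Real.exp (δ * Complex.abs z) := hFz
              _ ≤ Cδ * Real.exp ((bb*z).re) :=
                  mul_le_mul_of_nonneg_left (Real.exp_le_exp.2 hδle) hCδ0.le
          have tri : Complex.abs (p₁ * Complex.exp (l₁*z) + p₂ * Complex.exp (l₂*z) - F z)
              ≤ Complex.abs (p₁ * Complex.exp (l₁*z)) + Complex.abs (p₂ * Complex.exp (l₂*z))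
                + Complex.abs (F z) := by
            have u1 := habs_sub (p₁ * Complex.exp (l₁*z) + p₂ * Complex.exp (l₂*z)) (F z)
            have u2 := Complex.abs.add_le (p₁ * Complex.exp (l₁*z)) (p₂ * Complex.exp (l₂*z))
            linarith
          rw [hSdef]
          have hXpos := Real.exp_pos ((bb*z).re)
          nlinarith
        have hEre : (Q.eval z).re = a0re + (bb*z).re := by
          rw [hQev z, Complex.add_re, ha0def, hbbdef]
        set X := Real.exp ((bb*z).re) with hX
        have hX0 : 0 < X := Real.exp_pos _
        have hEa : Real.exp ((Q.eval z).re) = Real.exp a0re * X := by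
          rw [hEre, Real.exp_add]
        rw [hEa] at hE
        have hstep : cq * (Real.exp a0re * X) * Complex.abs (g z) ≤ S * X := by
          calc cq * (Real.exp a0re * X) * Complex.abs (g z)
              ≤ Complex.abs (q.eval z) * (Real.exp a0re * X) * Complex.abs (g z) := by
                apply mul_le_mul_of_nonneg_right _ (Complex.abs.nonneg _)
                apply mul_le_mul_of_nonneg_right hq1 (by positivity)
            _ ≤ S * X := by rw [hE]; exact hup
        have hgle : Complex.abs (g z) ≤ S / (cq * Real.exp a0re) := by
          rw [le_div_iff₀ (by positivity)]
          have h9 : (Complex.abs (g z) * (cq * Real.exp a0re)) * X ≤ S * X := by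
            calc (Complex.abs (g z) * (cq * Real.exp a0re)) * X
                = cq * (Real.exp a0re * X) * Complex.abs (g z) := by ring
              _ ≤ S * X := hstep
          exact le_of_mul_le_mul_right h9 hX0
        have hK₁le : S / (cq * Real.exp a0re) ≤ K₁ := by
          rw [hK₁def]
          apply div_le_div_of_nonneg_left hS0 (by positivity)
          exact mul_le_mul_of_nonneg_left (Real.exp_le_exp.2 (neg_abs_le a0re)) hcq0.le
        exact le_trans (le_trans hgle hK₁le) (le_max_left _ _)
    have hgrow2 : ∀ z, Complex.abs (g z)
        ≤ (C₀ * Real.exp (2 * Complex.abs c ^ β)) * Real.exp (2 * Complex.abs z ^ β) := by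
      intro z
      simp only [hgdef]
      exact shift_growth hβ0 hβ1 hC₀ hb c z
    have hbound := bounded_of_sector hgd hβ0 hβ1 (by positivity) hgrow2 hl₁ hψ0 hψ2 hψβ hK
    have hbd : Bornology.IsBounded (Set.range g) := by
      rw [Metric.isBounded_iff_subset_closedBall 0]
      refine ⟨max K₁ K₂, ?_⟩
      rintro _ ⟨z, rfl⟩
      simp only [Metric.mem_closedBall, Complex.dist_eq, sub_zero]
      exact hbound z
    obtain ⟨k, hk⟩ := hgd.exists_const_forall_eq_of_bounded hbd
    apply hpoly
    refine ⟨Polynomial.C k, fun z => ?_⟩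
    rw [Polynomial.eval_C]
    have hkk := hk (z - c)
    simp only [hgdef] at hkk
    rwa [sub_add_cancel] at hkk
  · -- degree ≥ 2 case
    obtain ⟨v, hv, hvl, hvm, hvM⟩ := exists_unit_dir hl₁ hsubne hlead (d := Q.natDegree) hd2
    have hsub : ((l₁ - l₂)*v).re = (l₁*v).re - (l₂*v).re := by
      rw [sub_mul, Complex.sub_re]
    have hne : (l₂*v).re ≠ (l₁*v).re := by
      intro h0
      apply hvm
      rw [hsub, h0]
      ring
    rcases lt_or_gt_of_ne hne with hlt | hgt
    · have := ray_coeff_nonneg q Q g F p₁ p₂ l₁ l₂ hp₁ hFg heq hv hvl hlt hQ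
      linarith
    · have := ray_coeff_nonneg q Q g F p₂ p₁ l₂ l₁ hp₂ hFg heq' hv
        (lt_trans hvl hgt) hgt hQ
      linarith
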